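/- Let Λ = ⋀(ℂ^s), Ê = Λ^{⊕r}, and let m̂₁, ..., m̂_n ∈ End_Λ(Ê) be pairwise commuting endomorphisms. Then there exists a complete set of orthogonal idempotents ê₁, ..., ê_l ∈ End_Λ(Ê) such that: (1) each ê_j commutes with every m̂_i; (2) Ê = ê₁Ê ⊕ ... ⊕ ê_lÊ with each summand a free Λ-module invariant under all m̂_i; (3) to each j there corresponds an n-tuple (λ¹,...,λⁿ) of complex numbers with λⁱ an eigenvalue of the body m_{i,(0)} of m̂_i, such that the body of m̂_i restricted to ê_jÊ has λⁱ as its only eigenvalue. -/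

import Mathlib

open ExteriorAlgebra

noncomputable abbrev Grassmann (s : ℕ) : Type := ExteriorAlgebra ℂ (Fin s → ℂ)

noncomputable abbrev grassmannBody (s r : ℕ)
    (M : Matrix (Fin r) (Fin r) (Grassmann s)) : Matrix (Fin r) (Fin r) ℂ :=
  M.map (algebraMapInv (R := ℂ) (M := Fin s → ℂ))

namespace Stmt18Aux

variable (s : ℕ)

lemma epow_bot {m : ℕ} (hm : s < m) :
    (⋀[ℂ]^m (Fin s → ℂ) : Submodule ℂ (Grassmann s)) = ⊥ := by
  rw [← ιMulti_span_fixedDegree, eq_bot_iff, Submodule.span_le]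
  rintro x ⟨v, rfl⟩
  have hdep : ¬ LinearIndependent ℂ v := fun h => by
    have := h.fintype_card_le_finrank
    rw [Fintype.card_fin, Module.finrank_fin_fun] at this
    omega
  have h0 : ιMulti ℂ m v = 0 := AlternatingMap.map_linearDependent (ιMulti ℂ m) v hdep
  simp [h0]

/-- The filtration by degree: elements of degree `≥ k`. -/
noncomputable def Cfil (k : ℕ) : Submodule ℂ (Grassmann s) := ⨆ i, ⋀[ℂ]^(i+k) (Fin s → ℂ)

lemma epow_le_Cfil {m k : ℕ} (hk : k ≤ m) :
    (⋀[ℂ]^m (Fin s → ℂ) : Submodule ℂ (Grassmann s)) ≤ Cfil s k := by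
  have : m = (m - k) + k := by omega
  rw [this]
  exact le_iSup (fun i => (⋀[ℂ]^(i+k) (Fin s → ℂ) : Submodule ℂ (Grassmann s))) (m - k)

lemma Cfil_mul {k l : ℕ} {x y : Grassmann s} (hx : x ∈ Cfil s k) (hy : y ∈ Cfil s l) :
    x * y ∈ Cfil s (k + l) := by
  refine Submodule.iSup_induction (motive := fun x => x * y ∈ Cfil s (k+l)) _ hx ?_ (by simp) ?_
  · intro i a ha
    refine Submodule.iSup_induction (motive := fun y => a * y ∈ Cfil s (k+l)) _ hy ?_ (by simp) ?_
    · intro j b hb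
      have hmem : a * b ∈ (⋀[ℂ]^((i+k)+(j+l)) (Fin s → ℂ) : Submodule ℂ (Grassmann s)) := by
        rw [exteriorPower, pow_add]
        exact Submodule.mul_mem_mul ha hb
      exact epow_le_Cfil s (by omega) hmem
    · intro a' b' ha' hb'
      rw [mul_add]; exact add_mem ha' hb'
  · intro a b ha hb
    rw [add_mul]; exact add_mem ha hb

lemma Cfil_bot : Cfil s (s + 1) = ⊥ := by
  rw [Cfil, iSup_eq_bot]
  intro i
  exact epow_bot s (by omega)

local notation "𝒜" => (fun i : ℕ => (⋀[ℂ]^i (Fin s → ℂ) : Submodule ℂ (Grassmann s)))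

lemma proj_zero_eq (x : Grassmann s) :
    (DirectSum.decompose 𝒜 x 0 : Grassmann s) = algebraMap ℂ (Grassmann s) (algebraMapInv x) := by
  have hmul : ∀ x y : Grassmann s,
      (DirectSum.decompose 𝒜 (x * y) 0 : Grassmann s) =
        (DirectSum.decompose 𝒜 x 0 : Grassmann s) * (DirectSum.decompose 𝒜 y 0 : Grassmann s) := by
    intro x y
    simpa only [GradedRing.projZeroRingHom_apply] using
      map_mul (GradedRing.projZeroRingHom 𝒜) x y
  induction x using ExteriorAlgebra.induction with
  | algebraMap r =>
      rw [algebraMap_leftInverse]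
      have hmem : (algebraMap ℂ (Grassmann s)) r ∈ 𝒜 0 := by
        rw [Algebra.algebraMap_eq_smul_one]
        exact Submodule.smul_mem _ _ (SetLike.one_mem_graded 𝒜)
      rw [DirectSum.decompose_of_mem_same 𝒜 hmem]
  | ι v =>
      have hmem : ι ℂ v ∈ 𝒜 1 := by
        show ι ℂ v ∈ (LinearMap.range (ι ℂ : (Fin s → ℂ) →ₗ[ℂ] Grassmann s)) ^ 1
        rw [pow_one]
        exact LinearMap.mem_range_self _ _
      rw [DirectSum.decompose_of_mem_ne 𝒜 hmem one_ne_zero]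
      have : algebraMapInv (ι ℂ v) = (0 : ℂ) := by
        simp [algebraMapInv]
      rw [this, map_zero]
  | mul a b ha hb => rw [hmul, ha, hb, map_mul, map_mul]
  | add a b ha hb =>
      rw [DirectSum.decompose_add, DirectSum.add_apply, Submodule.coe_add, ha, hb, map_add,
        map_add]

lemma mem_Cfil_one {x : Grassmann s} (hx : algebraMapInv x = 0) : x ∈ Cfil s 1 := by
  classical
  have hsum := DirectSum.sum_support_decompose 𝒜 x
  rw [← hsum]
  refine Submodule.sum_mem _ ?_
  intro i hi
  rcases Nat.eq_zero_or_pos i with h0 | hpos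
  · subst h0
    have : (DirectSum.decompose 𝒜 x 0 : Grassmann s) = 0 := by
      rw [proj_zero_eq, hx, map_zero]
    rw [this]; exact Submodule.zero_mem _
  · exact epow_le_Cfil s (by omega) (SetLike.coe_mem _)

lemma matrix_pow_zero_of_body_zero {ι : Type*} [Fintype ι] [DecidableEq ι]
    (M : Matrix ι ι (Grassmann s)) (h : ∀ p q, algebraMapInv (M p q) = 0) :
    M ^ (s + 1) = 0 := by
  have key : ∀ t : ℕ, ∀ p q, (M ^ (t + 1)) p q ∈ Cfil s (t + 1) := by
    intro t
    induction t with
    | zero => intro p q; rw [pow_one]; exact mem_Cfil_one s (h p q)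
    | succ t ih =>
        intro p q
        rw [pow_succ, Matrix.mul_apply]
        refine Submodule.sum_mem _ fun j _ => ?_
        exact Cfil_mul s (ih p j) (mem_Cfil_one s (h j q))
  ext p q
  have := key s p q
  rw [Cfil_bot] at this
  simpa using this

instance : Module.Finite ℂ (Grassmann s) := by
  classical
  rw [Module.finite_def]
  have hfg : ∀ i : ℕ, (⋀[ℂ]^i (Fin s → ℂ) : Submodule ℂ (Grassmann s)).FG := by
    intro i
    refine Submodule.FG.pow ?_ i
    rw [LinearMap.range_eq_map]
    exact Submodule.FG.map _ (Module.finite_def.mp inferInstance)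
  have htop : (⊤ : Submodule ℂ (Grassmann s)) =
      (Finset.range (s + 1)).sup (fun i => (⋀[ℂ]^i (Fin s → ℂ) : Submodule ℂ (Grassmann s))) := by
    refine le_antisymm ?_ le_top
    intro x _
    have hsum := DirectSum.sum_support_decompose 𝒜 x
    rw [← hsum]
    refine Submodule.sum_mem _ fun i _ => ?_
    rcases lt_or_ge i (s + 1) with hi | hi
    · exact Finset.le_sup (f := fun i => (⋀[ℂ]^i (Fin s → ℂ) : Submodule ℂ (Grassmann s)))
        (Finset.mem_range.mpr hi) (SetLike.coe_mem _)
    · have hmem : (DirectSum.decompose 𝒜 x i : Grassmann s) ∈ (⊥ : Submodule ℂ (Grassmann s)) := by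
        rw [← epow_bot s (show s < i by omega)]
        exact SetLike.coe_mem _
      have h0 : (DirectSum.decompose 𝒜 x i : Grassmann s) = 0 := by simpa using hmem
      rw [h0]
      exact Submodule.zero_mem _
  rw [htop]
  exact Finset.sup_induction Submodule.fg_bot (fun _ ha _ hb => ha.sup hb)
    (fun i _ => hfg i)


section Body

variable {s : ℕ}

local notation "inv'" => (algebraMapInv (R := ℂ) (M := Fin s → ℂ))

lemma body_map_mul {k l m : Type*} [Fintype l]
    (M : Matrix k l (Grassmann s)) (N : Matrix l m (Grassmann s)) :
    (M * N).map ⇑inv' = M.map ⇑inv' * N.map ⇑inv' := by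
  have := Matrix.map_mul (L := M) (M := N)
    (f := (algebraMapInv (R := ℂ) (M := Fin s → ℂ)).toRingHom)
  simpa using this

lemma matrix_pow_body_zero {ι : Type*} [Fintype ι] [DecidableEq ι]
    {M : Matrix ι ι (Grassmann s)}
    (h : M.map ⇑inv' = 0) : M ^ (s + 1) = 0 := by
  refine matrix_pow_zero_of_body_zero s M fun p q => ?_
  have := congr_fun (congr_fun h p) q
  simpa [Matrix.map_apply] using this

lemma idem_eq_zero_of_body_zero {ι : Type*} [Fintype ι] [DecidableEq ι]
    {M : Matrix ι ι (Grassmann s)} (hi : IsIdempotentElem M)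
    (h : M.map ⇑inv' = 0) : M = 0 := by
  have h2 := hi.pow_succ_eq s
  rw [matrix_pow_body_zero h] at h2
  exact h2.symm

lemma isUnit_of_body_one {ι : Type*} [Fintype ι] [DecidableEq ι]
    {M : Matrix ι ι (Grassmann s)}
    (h : M.map ⇑inv' = 1) : IsUnit M := by
  have hnil : IsNilpotent (1 - M) := by
    refine ⟨s + 1, matrix_pow_body_zero ?_⟩
    have h1 : (1 - M).map ⇑inv' = 1 - M.map ⇑inv' := by
      ext p q
      simp [Matrix.map_apply, Matrix.sub_apply, Matrix.one_apply, apply_ite]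
    rw [h1, h, sub_self]
  simpa using hnil.isUnit_one_sub

lemma body_map_sub {k l : Type*} (M N : Matrix k l (Grassmann s)) :
    (M - N).map ⇑inv' = M.map ⇑inv' - N.map ⇑inv' := by
  ext p q
  simp [Matrix.map_apply, Matrix.sub_apply]

lemma body_map_one {ι : Type*} [Fintype ι] [DecidableEq ι] :
    (1 : Matrix ι ι (Grassmann s)).map ⇑inv' = 1 := by
  ext p q
  simp [Matrix.map_apply, Matrix.one_apply, apply_ite]

lemma body_map_smul {k l : Type*} (c : ℂ) (M : Matrix k l (Grassmann s)) :
    (c • M).map ⇑inv' = c • M.map ⇑inv' := by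
  ext p q
  simp [Matrix.map_apply, Matrix.smul_apply]

lemma body_map_pow {ι : Type*} [Fintype ι] [DecidableEq ι]
    (M : Matrix ι ι (Grassmann s)) (N : ℕ) :
    (M ^ N).map ⇑inv' = (M.map ⇑inv') ^ N := by
  induction N with
  | zero => simpa [pow_zero] using body_map_one (s := s) (ι := ι)
  | succ t ih => rw [pow_succ, body_map_mul, ih, pow_succ]

lemma body_map_zero {k l : Type*} :
    (0 : Matrix k l (Grassmann s)).map ⇑inv' = 0 := by
  ext p q
  simp [Matrix.map_apply]

end Body

section Free

variable {s : ℕ}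

local notation "inv'" => (algebraMapInv (R := ℂ) (M := Fin s → ℂ))

set_option maxHeartbeats 1000000 in
lemma free_block {r : ℕ} (e : Matrix (Fin r) (Fin r) (Grassmann s)) (he : e * e = e) :
    ∃ (d : ℕ) (ξ : Fin d → (Fin r → Grassmann s)),
      (∀ a, e.mulVec (ξ a) = ξ a) ∧
      (∀ w : Fin r → Grassmann s, e.mulVec w = w →
        ∃! coef : Fin d → Grassmann s, w = ∑ a, fun p => ξ a p * coef a) := by
  classical
  set E : Matrix (Fin r) (Fin r) ℂ := e.map ⇑inv' with hE
  have hEidem : E * E = E := by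
    rw [hE, ← body_map_mul, he]
  set Vr : Submodule ℂ (Fin r → ℂ) := LinearMap.range E.mulVecLin with hVr
  have hfix : ∀ v ∈ Vr, E.mulVec v = v := by
    rintro v ⟨u, rfl⟩
    show E.mulVec (E.mulVec u) = E.mulVec u
    rw [Matrix.mulVec_mulVec, hEidem]
  set d : ℕ := Module.finrank ℂ Vr with hd
  set b : Module.Basis (Fin d) ℂ Vr := Module.finBasis ℂ Vr with hb
  set colV : Fin r → Vr := fun q => ⟨E.mulVec (Pi.single q 1), LinearMap.mem_range_self _ _⟩
    with hcolV
  set C : Matrix (Fin r) (Fin d) ℂ := Matrix.of (fun p a => (b a : Fin r → ℂ) p) with hC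
  set D : Matrix (Fin d) (Fin r) ℂ := Matrix.of (fun a q => b.repr (colV q) a) with hD
  have hcol_sum : ∀ c : Fin r → ℂ, (∑ q, c q • (colV q : Fin r → ℂ)) = E.mulVec c := by
    intro c
    have h1 : ∀ q, (colV q : Fin r → ℂ) = E.mulVecLin ((Pi.single q (1:ℂ) : Fin r → ℂ)) := by
      intro q
      rw [Matrix.mulVecLin_apply]
    have h2 : (∑ q, c q • (Pi.single q (1:ℂ) : Fin r → ℂ)) = c := by
      funext p
      rw [Finset.sum_apply]
      simp [Pi.single_apply, mul_ite]
    calc ∑ q, c q • (colV q : Fin r → ℂ)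
        = ∑ q, E.mulVecLin (c q • (Pi.single q (1:ℂ) : Fin r → ℂ)) := by
          refine Finset.sum_congr rfl fun q _ => ?_
          rw [h1, map_smul]
      _ = E.mulVecLin (∑ q, c q • (Pi.single q (1:ℂ) : Fin r → ℂ)) := (map_sum _ _ _).symm
      _ = E.mulVec c := by rw [h2, Matrix.mulVecLin_apply]
  have hDC : D * C = 1 := by
    ext a a'
    rw [Matrix.mul_apply, Matrix.one_apply]
    have h1 : (∑ q, D a q * C q a') = b.repr (∑ q, (b a' : Fin r → ℂ) q • colV q) a := by
      rw [map_sum, Finsupp.finset_sum_apply]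
      refine Finset.sum_congr rfl fun q _ => ?_
      rw [map_smul, Finsupp.smul_apply, smul_eq_mul]
      simp [hD, hC, mul_comm]
    have h2 : (∑ q, (b a' : Fin r → ℂ) q • colV q) = b a' := by
      apply Subtype.ext
      have hco : ((∑ q, (b a' : Fin r → ℂ) q • colV q : Vr) : Fin r → ℂ)
          = ∑ q, (b a' : Fin r → ℂ) q • (colV q : Fin r → ℂ) := by
        rw [AddSubmonoidClass.coe_finset_sum]
        rfl
      rw [hco, hcol_sum, hfix _ (SetLike.coe_mem _)]
    rw [h1, h2, b.repr_self]
    simp [Finsupp.single_apply, eq_comm]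
  have hCD : C * D = E := by
    ext p q
    rw [Matrix.mul_apply]
    have h3 : (∑ a, C p a * D a q)
        = ((∑ a, b.repr (colV q) a • b a : Vr) : Fin r → ℂ) p := by
      have hco : ((∑ a, b.repr (colV q) a • b a : Vr) : Fin r → ℂ)
          = ∑ a, b.repr (colV q) a • (b a : Fin r → ℂ) := by
        rw [AddSubmonoidClass.coe_finset_sum]
        rfl
      rw [hco, Finset.sum_apply]
      refine Finset.sum_congr rfl fun a _ => ?_
      simp [hC, hD, mul_comm]
    rw [h3, b.sum_repr (colV q)]
    simp [hcolV, Matrix.mulVec_single]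
  -- lift to the Grassmann algebra
  set Ah : ℂ →+* Grassmann s := (algebraMap ℂ (Grassmann s)) with hAh
  set Ch : Matrix (Fin r) (Fin d) (Grassmann s) := C.map ⇑Ah with hCh
  set Dh : Matrix (Fin d) (Fin r) (Grassmann s) := D.map ⇑Ah with hDh
  set X : Matrix (Fin r) (Fin d) (Grassmann s) := e * Ch with hX
  set Y : Matrix (Fin d) (Fin r) (Grassmann s) := Dh * e with hY
  have hmapC : Ch.map ⇑inv' = C := by
    ext p a
    simp [hCh, Matrix.map_apply, hAh, ExteriorAlgebra.algebraMap_leftInverse (Fin s → ℂ) _]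
  have hmapD : Dh.map ⇑inv' = D := by
    ext a p
    simp [hDh, Matrix.map_apply, hAh, ExteriorAlgebra.algebraMap_leftInverse (Fin s → ℂ) _]
  have hmapX : X.map ⇑inv' = E * C := by
    rw [hX, body_map_mul, hmapC, ← hE]
  have hmapY : Y.map ⇑inv' = D * E := by
    rw [hY, body_map_mul, hmapD, ← hE]
  have hDEC : D * E * (E * C) = 1 := by
    rw [Matrix.mul_assoc D E (E * C), ← Matrix.mul_assoc E E C, hEidem, ← hCD,
      Matrix.mul_assoc C D C, hDC, Matrix.mul_one, hDC]
  have hmapYX : (Y * X).map ⇑inv' = 1 := by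
    rw [body_map_mul, hmapY, hmapX, hDEC]
  obtain ⟨u, hu⟩ := isUnit_of_body_one hmapYX
  set G : Matrix (Fin d) (Fin d) (Grassmann s) := Units.val u⁻¹ with hG
  have hGYX : G * (Y * X) = 1 := by rw [hG, ← hu]; exact u.inv_mul
  have hYXG : (Y * X) * G = 1 := by rw [hG, ← hu]; exact u.mul_inv
  set Z : Matrix (Fin d) (Fin r) (Grassmann s) := G * Y with hZ
  have hZX : Z * X = 1 := by rw [hZ, Matrix.mul_assoc]; exact hGYX
  have heX : e * X = X := by rw [hX, ← Matrix.mul_assoc, he]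
  have hYe : Y * e = Y := by rw [hY, Matrix.mul_assoc, he]
  have hZe : Z * e = Z := by rw [hZ, Matrix.mul_assoc, hYe]
  have hmapG : G.map ⇑inv' = 1 := by
    have := congr_arg (fun M => Matrix.map M ⇑inv') hYXG
    simp only [body_map_mul, hmapYX] at this
    rw [one_mul] at this
    have h1 : (1 : Matrix (Fin d) (Fin d) (Grassmann s)).map ⇑inv' = 1 := by
      ext p q
      simp [Matrix.map_apply, Matrix.one_apply, apply_ite]
    rw [h1] at this
    exact this
  have hmapXZ : (X * Z).map ⇑inv' = E := by
    rw [body_map_mul, hmapX, hZ, body_map_mul, hmapG, hmapY, Matrix.one_mul,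
      Matrix.mul_assoc E C (D * E), ← Matrix.mul_assoc C D E, hCD, hEidem, hEidem]
  have heXZ : e * (X * Z) = X * Z := by rw [← Matrix.mul_assoc, heX]
  have hXZe : (X * Z) * e = X * Z := by rw [Matrix.mul_assoc, hZe]
  have hXZXZ : (X * Z) * (X * Z) = X * Z := by
    rw [Matrix.mul_assoc X Z (X * Z), ← Matrix.mul_assoc Z X Z, hZX, Matrix.one_mul]
  have hq : IsIdempotentElem (e - X * Z) := by
    show (e - X * Z) * (e - X * Z) = e - X * Z
    rw [sub_mul, mul_sub, mul_sub, he, heXZ, hXZe, hXZXZ]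
    abel
  have hqbody : (e - X * Z).map ⇑inv' = 0 := by
    have hsub : (e - X * Z).map ⇑inv' = e.map ⇑inv' - (X * Z).map ⇑inv' := by
      ext p q
      simp only [Matrix.map_apply, Matrix.sub_apply, map_sub]
    rw [hsub, hmapXZ, ← hE, sub_self]
  have heq : e = X * Z := by
    have h0 := idem_eq_zero_of_body_zero hq hqbody
    rwa [sub_eq_zero] at h0
  refine ⟨d, fun a => fun p => X p a, ?_, ?_⟩
  · intro a
    funext p
    have : (e.mulVec fun p => X p a) p = (e * X) p a := by
      rw [Matrix.mulVec, Matrix.mul_apply]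
      rfl
    rw [this, heX]
  · intro w hw
    refine ⟨Z.mulVec w, ?_, ?_⟩
    · funext p
      rw [Finset.sum_apply]
      have h1 : (∑ a, X p a * Z.mulVec w a) = (X.mulVec (Z.mulVec w)) p := by
        rw [Matrix.mulVec, dotProduct]
      rw [h1, Matrix.mulVec_mulVec, ← heq, hw]
    · intro c hc
      have hwc : w = X.mulVec c := by
        funext p
        rw [hc, Finset.sum_apply]
        rw [Matrix.mulVec, dotProduct]
      rw [hwc, Matrix.mulVec_mulVec, hZX, Matrix.one_mulVec]

end Free


section Helpers

variable {s : ℕ}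

lemma mulVec_sum {k m : Type*} [Fintype m] {ι : Type*} (t : Finset ι)
    (A : Matrix k m (Grassmann s)) (c : ι → (m → Grassmann s)) :
    A.mulVec (∑ j ∈ t, c j) = ∑ j ∈ t, A.mulVec (c j) := by
  funext p
  simp only [Matrix.mulVec, dotProduct, Finset.sum_apply, Finset.mul_sum]
  rw [Finset.sum_comm]

lemma sum_mulVec {k m : Type*} [Fintype m] {ι : Type*} (t : Finset ι)
    (A : ι → Matrix k m (Grassmann s)) (v : m → Grassmann s) :
    (∑ j ∈ t, A j).mulVec v = ∑ j ∈ t, (A j).mulVec v := by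
  funext p
  simp only [Matrix.mulVec, dotProduct, Finset.sum_apply, Finset.sum_mul,
    Matrix.sum_apply]
  rw [Finset.sum_comm]

end Helpers

end Stmt18Aux

set_option maxHeartbeats 2000000 in
set_option synthInstance.maxHeartbeats 400000 in
open Stmt18Aux in
/-- Simultaneous primary decomposition of `Ê = Λ^{⊕r}` under a commuting system of
endomorphisms `m̂₁, …, m̂ₙ`: there is a complete set of orthogonal idempotents commuting
with all `m̂ᵢ`, decomposing `Ê` into a direct sum of free right `Λ`-modules invariant under
all the `m̂ᵢ`, on each of which the body of `m̂ᵢ` has a single eigenvalue `λʲᵢ`. -/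
theorem stmt_18 (s r n : ℕ) (mhat : Fin n → Matrix (Fin r) (Fin r) (Grassmann s))
    (hcomm : ∀ i j, mhat i * mhat j = mhat j * mhat i) (hr : 0 < r) :
    ∃ (l : ℕ) (e : Fin l → Matrix (Fin r) (Fin r) (Grassmann s)),
      -- complete set of orthogonal idempotents
      (∑ j, e j = 1) ∧
      (∀ j j', j ≠ j' → e j * e j' = 0) ∧
      (∀ j, e j * e j = e j) ∧
      -- (1) each `e j` commutes with every `m̂ i`
      (∀ i j, e j * mhat i = mhat i * e j) ∧
      -- (2) direct sum decomposition `Ê = e₁Ê ⊕ ⋯ ⊕ e_lÊ`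
      (∀ v : Fin r → Grassmann s,
        ∃! c : Fin l → (Fin r → Grassmann s),
          (∀ j, (e j).mulVec (c j) = c j) ∧ v = ∑ j, c j) ∧
      -- each summand is a free right Λ-module
      (∀ j, ∃ (dj : ℕ) (ξ : Fin dj → (Fin r → Grassmann s)),
        (∀ a, (e j).mulVec (ξ a) = ξ a) ∧
        (∀ w : Fin r → Grassmann s, (e j).mulVec w = w →
          ∃! coef : Fin dj → Grassmann s, w = ∑ a, fun p => ξ a p * coef a)) ∧
      -- (3) eigenvalue data: on the block of `e j`, the body of `m̂ i` has the single
      -- eigenvalue `lam j i`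
      (∃ lam : Fin l → Fin n → ℂ,
        ∀ j i, lam j i ∈ spectrum ℂ (grassmannBody s r (mhat i)) ∧
          ∃ Npow : ℕ,
            ((grassmannBody s r (mhat i) - lam j i • (1 : Matrix (Fin r) (Fin r) ℂ)) *
              grassmannBody s r (e j)) ^ Npow = 0) := by
  classical
  set S : Subalgebra ℂ (Matrix (Fin r) (Fin r) (Grassmann s)) :=
    Algebra.adjoin ℂ (Set.range mhat) with hSdef
  have hmem : ∀ i, mhat i ∈ S := fun i => Algebra.subset_adjoin ⟨i, rfl⟩
  letI : CommRing S := Algebra.adjoinCommRingOfComm ℂ (by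
    rintro a ⟨i, rfl⟩ b ⟨j, rfl⟩
    exact hcomm i j)
  haveI : Module.Finite ℂ S := by
    have hfg : (Subalgebra.toSubmodule S).FG := IsNoetherian.noetherian _
    exact Module.Finite.iff_fg.mpr hfg
  haveI : IsArtinianRing S := IsArtinianRing.of_finite ℂ S
  set MS : Set (Ideal S) := {I : Ideal S | I.IsMaximal} with hMS
  haveI : Finite ↥MS := (IsArtinianRing.setOfPred_isMaximal_finite S).to_subtype
  letI : Fintype ↥MS := (IsArtinianRing.setOfPred_isMaximal_finite S).fintype
  set φ : S →+* ∀ I : ↥MS, S ⧸ I.1 := Pi.ringHom (fun I : ↥MS => Ideal.Quotient.mk I.1)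
    with hφdef
  have hco : Pairwise (Function.onFun IsCoprime fun I : ↥MS => I.1) := by
    intro I J hIJ
    have hI : I.1.IsMaximal := I.2
    have hJ : J.1.IsMaximal := J.2
    exact Ideal.isCoprime_iff_sup_eq.mpr (hI.coprime_of_ne hJ (fun h => hIJ (Subtype.ext h)))
  have hφsurj : Function.Surjective φ := by
    intro x
    obtain ⟨y, hy⟩ := Ideal.quotientInfToPiQuotient_surj hco x
    obtain ⟨z, rfl⟩ := Ideal.Quotient.mk_surjective y
    refine ⟨z, ?_⟩
    rw [← hy, Ideal.quotientInfToPiQuotient_mk]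
    rfl
  have hker : ∀ x ∈ RingHom.ker φ, IsNilpotent x := by
    intro x hx
    rw [RingHom.mem_ker] at hx
    rw [nilpotent_iff_mem_prime]
    intro J hJ
    haveI := hJ
    have hmax : J.IsMaximal := IsArtinianRing.isMaximal_of_isPrime J
    have h0 := congr_fun hx (⟨J, hmax⟩ : ↥MS)
    exact Ideal.Quotient.eq_zero_iff_mem.mp h0
  obtain ⟨ε, hε, hφε⟩ := CompleteOrthogonalIdempotents.lift_of_isNilpotent_ker φ hker
    (CompleteOrthogonalIdempotents.single (fun I : ↥MS => S ⧸ I.1)) (fun I => hφsurj _)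
  -- eigenvalues
  have hlam : ∀ (I : ↥MS) (i : Fin n), ∃ c : ℂ,
      Ideal.Quotient.mk I.1 (⟨mhat i, hmem i⟩ : S) = algebraMap ℂ (S ⧸ I.1) c := by
    intro I i
    haveI hImax : I.1.IsMaximal := I.2
    letI : Field (S ⧸ I.1) := Ideal.Quotient.field I.1
    haveI : Module.Finite ℂ (S ⧸ I.1) := Module.Finite.of_surjective
      (Ideal.Quotient.mkₐ ℂ I.1).toLinearMap (Ideal.Quotient.mkₐ_surjective ℂ I.1)
    haveI : Algebra.IsIntegral ℂ (S ⧸ I.1) := Algebra.IsIntegral.of_finite ℂ _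
    obtain ⟨c, hc⟩ := (IsAlgClosed.algebraMap_bijective_of_isIntegral
      (k := ℂ) (K := S ⧸ I.1)).2 (Ideal.Quotient.mk I.1 (⟨mhat i, hmem i⟩ : S))
    exact ⟨c, hc.symm⟩
  choose lam0 hlam0 using hlam
  have hnil : ∀ (I : ↥MS) (i : Fin n),
      IsNilpotent (((⟨mhat i, hmem i⟩ : S) - lam0 I i • 1) * ε I) := by
    intro I i
    apply hker
    rw [RingHom.mem_ker, map_mul]
    have h1 : φ (ε I) = Pi.single I 1 := congr_fun hφε I
    rw [h1]
    funext J
    rcases eq_or_ne J I with rfl | hJI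
    · rw [Pi.mul_apply, Pi.single_eq_same, mul_one]
      show Ideal.Quotient.mk J.1 ((⟨mhat i, hmem i⟩ : S) - lam0 J i • 1) = 0
      rw [map_sub, hlam0]
      have h2 : (lam0 J i • (1 : S)) = algebraMap ℂ S (lam0 J i) :=
        (Algebra.algebraMap_eq_smul_one _).symm
      rw [h2]
      have h3 : Ideal.Quotient.mk J.1 (algebraMap ℂ S (lam0 J i))
          = algebraMap ℂ (S ⧸ J.1) (lam0 J i) := by
        rw [← Ideal.Quotient.mkₐ_eq_mk ℂ J.1]
        exact (Ideal.Quotient.mkₐ ℂ J.1).commutes (lam0 J i)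
      rw [h3, sub_self]
    · rw [Pi.mul_apply, Pi.single_eq_of_ne hJI, mul_zero]
      rfl
  -- assemble
  set l : ℕ := Fintype.card ↥MS with hl
  set κ : Fin l ≃ ↥MS := (Fintype.equivFin ↥MS).symm with hκ
  set e : Fin l → Matrix (Fin r) (Fin r) (Grassmann s) :=
    fun j => ((ε (κ j) : S) : Matrix (Fin r) (Fin r) (Grassmann s)) with he
  have hsum : ∑ j, e j = 1 := by
    have h1 : ∑ I : ↥MS, ε I = 1 := hε.complete
    calc ∑ j, e j = ∑ I : ↥MS, ((ε I : S) : Matrix (Fin r) (Fin r) (Grassmann s)) :=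
          Fintype.sum_equiv κ _ _ (fun j => rfl)
      _ = (((∑ I : ↥MS, ε I : S)) : Matrix (Fin r) (Fin r) (Grassmann s)) := by
          exact (map_sum S.val ε Finset.univ).symm
      _ = 1 := by rw [h1]; rfl
  have hortho : ∀ j j', j ≠ j' → e j * e j' = 0 := by
    intro j j' hne
    have h1 : ε (κ j) * ε (κ j') = 0 := hε.1.ortho (fun h => hne (κ.injective h))
    have h2 := congrArg (S.val) h1
    simpa using h2
  have hidem : ∀ j, e j * e j = e j := by
    intro j
    have h1 : ε (κ j) * ε (κ j) = ε (κ j) := hε.1.idem (κ j)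
    have h2 := congrArg (S.val) h1
    simpa using h2
  have hcomm' : ∀ i j, e j * mhat i = mhat i * e j := by
    intro i j
    have h1 : ε (κ j) * (⟨mhat i, hmem i⟩ : S) = (⟨mhat i, hmem i⟩ : S) * ε (κ j) :=
      mul_comm _ _
    have h2 := congrArg (S.val) h1
    simpa using h2
  refine ⟨l, e, hsum, hortho, hidem, hcomm', ?_, fun j => free_block (e j) (hidem j), ?_⟩
  · -- direct sum decomposition
    intro v
    refine ⟨fun j => (e j).mulVec v, ⟨?_, ?_⟩, ?_⟩
    · intro j
      rw [Matrix.mulVec_mulVec, hidem j]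
    · rw [← sum_mulVec, hsum, Matrix.one_mulVec]
    · rintro c ⟨hc1, hc2⟩
      funext j
      have h3 : (e j).mulVec v = c j := by
        calc (e j).mulVec v = (e j).mulVec (∑ j', c j') := by rw [← hc2]
          _ = ∑ j', (e j).mulVec (c j') := mulVec_sum _ _ _
          _ = ∑ j', ((e j) * (e j')).mulVec (c j') := by
              refine Finset.sum_congr rfl fun j' _ => ?_
              rw [← Matrix.mulVec_mulVec, hc1 j']
          _ = c j := by
              rw [Finset.sum_eq_single j]
              · rw [hidem j, hc1 j]
              · intro j' _ hj'
                rw [hortho j j' (Ne.symm hj'), Matrix.zero_mulVec]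
              · intro hj
                exact absurd (Finset.mem_univ j) hj
      exact h3.symm
  · -- eigenvalue data
    refine ⟨fun j i => lam0 (κ j) i, fun j i => ?_⟩
    obtain ⟨N, hN⟩ := hnil (κ j) i
    have hN1 : (((⟨mhat i, hmem i⟩ : S) - lam0 (κ j) i • 1) * ε (κ j)) ^ (N + 1) = 0 := by
      rw [pow_succ, hN, zero_mul]
    have hR : (((mhat i) - lam0 (κ j) i • 1) * e j) ^ (N + 1) = 0 := by
      have h2 := congrArg (S.val) hN1
      simpa using h2
    have hbody : ((grassmannBody s r (mhat i) - lam0 (κ j) i • 1) *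
        grassmannBody s r (e j)) ^ (N + 1) = 0 := by
      have h2 := congrArg (fun M => Matrix.map M ⇑(algebraMapInv (R := ℂ) (M := Fin s → ℂ))) hR
      simp only [body_map_pow, body_map_mul, body_map_sub, body_map_smul, body_map_one,
        body_map_zero] at h2
      exact h2
    have hBidem : grassmannBody s r (e j) * grassmannBody s r (e j)
        = grassmannBody s r (e j) := by
      have h2 := congrArg (fun M => Matrix.map M ⇑(algebraMapInv (R := ℂ) (M := Fin s → ℂ)))
        (hidem j)
      simpa only [body_map_mul] using h2
    have hABcomm : Commute (grassmannBody s r (mhat i) - lam0 (κ j) i • 1)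
        (grassmannBody s r (e j)) := by
      have h1 := congrArg (fun M => Matrix.map M ⇑(algebraMapInv (R := ℂ) (M := Fin s → ℂ)))
        (hcomm' i j)
      simp only [body_map_mul] at h1
      have h2 : Commute (grassmannBody s r (mhat i)) (grassmannBody s r (e j)) := h1.symm
      have h3 : Commute (lam0 (κ j) i • (1 : Matrix (Fin r) (Fin r) ℂ))
          (grassmannBody s r (e j)) := by
        rw [← Algebra.algebraMap_eq_smul_one]
        exact Algebra.commutes _ _
      exact h2.sub_left h3
    constructor
    · rw [spectrum.mem_iff]
      intro hu
      have hu2 : IsUnit (grassmannBody s r (mhat i) - lam0 (κ j) i • 1) := by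
        have := hu.neg
        rwa [neg_sub, Algebra.algebraMap_eq_smul_one] at this
      have hu3 : IsUnit ((grassmannBody s r (mhat i) - lam0 (κ j) i • 1) ^ (N + 1)) := hu2.pow _
      have hkey : (grassmannBody s r (mhat i) - lam0 (κ j) i • 1) ^ (N + 1) *
          grassmannBody s r (e j) = 0 := by
        have h4 := (hABcomm.mul_pow (N + 1)).symm.trans hbody
        rwa [(IsIdempotentElem.pow_succ_eq N hBidem : grassmannBody s r (e j) ^ (N+1) = _)] at h4
      obtain ⟨u, hu4⟩ := hu3
      have hB0 : grassmannBody s r (e j) = 0 := by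
        calc grassmannBody s r (e j)
            = ↑u⁻¹ * (↑u * grassmannBody s r (e j)) := by
              rw [← Matrix.mul_assoc, Units.inv_mul, Matrix.one_mul]
          _ = 0 := by rw [hu4, hkey, Matrix.mul_zero]
      have hε0 : e j = 0 := idem_eq_zero_of_body_zero (hidem j) hB0
      have hε0' : ε (κ j) = 0 := by
        apply Subtype.ext
        have h6 : e j = (0 : Matrix (Fin r) (Fin r) (Grassmann s)) := hε0
        rw [he] at h6
        simpa using h6
      have hsingle := congr_fun hφε (κ j)
      simp only [Function.comp_apply] at hsingle
      rw [hε0', map_zero] at hsingle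
      have h5 := congr_fun hsingle (κ j)
      rw [Pi.single_eq_same] at h5
      haveI hImax : (κ j).1.IsMaximal := (κ j).2
      haveI : Nontrivial (S ⧸ (κ j).1) := Ideal.Quotient.nontrivial_iff.mpr hImax.ne_top
      exact one_ne_zero h5.symm
    · exact ⟨N + 1, hbody⟩
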